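/- Let P ∈ ℚ⟦X⟧ be the formal power series with constant coefficient 1 satisfying P² = 1 + 8·X·P³, and let y := X·(P·(9 − P²)/8)³ ∈ ℚ⟦X⟧. Let W ∈ ℚ⟦X⟧ be the unique formal power series with zero constant coefficient satisfying (P² − 1)·(W + 1)² = 8·W, and let Y ∈ ℚ⟦T⟧ be the unique formal power series with zero constant coefficient satisfying Q·(Y + 1)² = Y, where Q ∈ ℚ⟦T⟧ has zero constant coefficient and satisfies Q·(1 − Q)³ = T. Then the substitution of y into Y equals W in ℚ⟦X⟧. -/

import Mathlib

open PowerSeries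

/-- Substitution of the power series `f` (assumed to have zero constant coefficient)
into the power series `g`. -/
noncomputable def substInto (f g : PowerSeries ℚ) : PowerSeries ℚ :=
  PowerSeries.mk fun n =>
    PowerSeries.coeff n (Polynomial.aeval f (PowerSeries.trunc (n + 1) g))

section aux

variable {f : PowerSeries ℚ}

lemma coeff_pow_zero (hf : constantCoeff f = 0) {n i : ℕ} (h : n < i) :
    coeff n (f ^ i) = 0 := by
  have hd : (X : PowerSeries ℚ) ^ i ∣ f ^ i :=
    pow_dvd_pow_of_dvd (X_dvd_iff.mpr hf) i
  exact X_pow_dvd_iff.mp hd n h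

lemma coeff_aeval_congr (hf : constantCoeff f = 0) {n : ℕ} {p q : Polynomial ℚ}
    (h : ∀ i ≤ n, p.coeff i = q.coeff i) :
    coeff n (Polynomial.aeval f p) = coeff n (Polynomial.aeval f q) := by
  set N := max (p.natDegree + 1) (q.natDegree + 1) with hN
  have hp : p.natDegree < N := lt_of_lt_of_le (Nat.lt_succ_self _) (le_max_left _ _)
  have hq : q.natDegree < N := lt_of_lt_of_le (Nat.lt_succ_self _) (le_max_right _ _)
  rw [Polynomial.aeval_eq_sum_range' hp, Polynomial.aeval_eq_sum_range' hq,
    map_sum, map_sum]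
  refine Finset.sum_congr rfl ?_
  intro i _
  rcases le_or_gt i n with hi | hi
  · rw [h i hi]
  · rw [coeff_smul, coeff_smul, coeff_pow_zero hf hi, smul_zero, smul_zero]

lemma coeff_substInto (hf : constantCoeff f = 0) (g : PowerSeries ℚ) {n m : ℕ}
    (h : n < m) :
    coeff n (substInto f g) = coeff n (Polynomial.aeval f (trunc m g)) := by
  rw [substInto, coeff_mk]
  apply coeff_aeval_congr hf
  intro i hi
  rw [coeff_trunc, coeff_trunc, if_pos (Nat.lt_succ_of_le hi), if_pos (lt_of_le_of_lt hi h)]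

lemma substInto_one : substInto f 1 = 1 := by
  ext n
  rw [substInto, coeff_mk, trunc_one, map_one]

lemma substInto_zero : substInto f 0 = 0 := by
  ext n
  rw [substInto, coeff_mk]
  have : trunc (n + 1) (0 : PowerSeries ℚ) = 0 := by
    ext i; rw [coeff_trunc]; simp
  rw [this, map_zero, map_zero]

lemma substInto_add (g h : PowerSeries ℚ) :
    substInto f (g + h) = substInto f g + substInto f h := by
  ext n
  rw [map_add, substInto, substInto, substInto, coeff_mk, coeff_mk, coeff_mk,
    map_add, map_add, map_add]

lemma substInto_mul (hf : constantCoeff f = 0) (g h : PowerSeries ℚ) :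
    substInto f (g * h) = substInto f g * substInto f h := by
  ext n
  have step1 : coeff n (substInto f (g * h)) =
      coeff n (Polynomial.aeval f (trunc (n + 1) g * trunc (n + 1) h)) := by
    rw [substInto, coeff_mk]
    apply coeff_aeval_congr hf
    intro i hi
    conv_lhs => rw [← trunc_trunc_mul_trunc (n := n + 1) g h]
    rw [coeff_trunc, if_pos (Nat.lt_succ_of_le hi), ← Polynomial.coe_mul,
      Polynomial.coeff_coe]
  rw [step1, map_mul, PowerSeries.coeff_mul, PowerSeries.coeff_mul]
  refine Finset.sum_congr rfl ?_
  intro x hx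
  rw [Finset.HasAntidiagonal.mem_antidiagonal] at hx
  rw [coeff_substInto hf g (show x.1 < n + 1 by omega),
    coeff_substInto hf h (show x.2 < n + 1 by omega)]

/-- `substInto f` as a ring homomorphism, for `f` with zero constant coefficient. -/
noncomputable def substHom (f : PowerSeries ℚ) (hf : constantCoeff f = 0) :
    PowerSeries ℚ →+* PowerSeries ℚ where
  toFun := substInto f
  map_one' := substInto_one
  map_mul' := substInto_mul hf
  map_zero' := substInto_zero
  map_add' := substInto_add

lemma substInto_X (hf : constantCoeff f = 0) : substInto f X = f := by
  ext n
  rw [coeff_substInto hf X (show n < n + 2 by omega), trunc_X, Polynomial.aeval_X]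

lemma constantCoeff_substInto (hf : constantCoeff f = 0) (g : PowerSeries ℚ) :
    constantCoeff (substInto f g) = constantCoeff g := by
  have ht : trunc 1 g = Polynomial.C (constantCoeff g) := by
    ext i
    rw [coeff_trunc, Polynomial.coeff_C]
    rcases Nat.eq_zero_or_pos i with hi | hi
    · subst hi; simp
    · rw [if_neg (by omega), if_neg (by omega)]
  rw [← coeff_zero_eq_constantCoeff_apply, substInto, coeff_mk, ht, Polynomial.aeval_C]
  simp [PowerSeries.algebraMap_apply]

end aux

/-- Let `P(0) = 1` with `P² = 1 + 8XP³` and `y := X·(P·(9−P²)/8)³`. Let `W(0) = 0`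
satisfy `(P²−1)·(W + 1)² = 8W` and `Y(0) = 0` satisfy `Q·(Y + 1)² = Y`, where
`Q(0) = 0` and `Q·(1−Q)³ = T`. Then substituting `y` into `Y` gives `W`. -/
theorem subst_X_series_triang
    (P Q W Y : PowerSeries ℚ)
    (hP0 : constantCoeff P = 1) (hP : P ^ 2 = 1 + 8 * X * P ^ 3)
    (hQ0 : constantCoeff Q = 0) (hQ : Q * (1 - Q) ^ 3 = X)
    (hW0 : constantCoeff W = 0) (hW : (P ^ 2 - 1) * (W + 1) ^ 2 = 8 * W)
    (hY0 : constantCoeff Y = 0) (hY : Q * (Y + 1) ^ 2 = Y) :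
    substInto (X * (P * (9 - P ^ 2) * (8 : PowerSeries ℚ)⁻¹) ^ 3) Y = W := by
  set f : PowerSeries ℚ := X * (P * (9 - P ^ 2) * (8 : PowerSeries ℚ)⁻¹) ^ 3 with hf_def
  have hf : constantCoeff f = 0 := by simp [hf_def]
  set S : PowerSeries ℚ →+* PowerSeries ℚ := substHom f hf with hS_def
  have h8c : constantCoeff (8 : PowerSeries ℚ) = 8 := by
    rw [map_ofNat]
  have h8ne : (8 : PowerSeries ℚ) ≠ 0 := by
    intro h; rw [h, map_zero] at h8c; norm_num at h8c
  have h8 : (8 : PowerSeries ℚ) * (8 : PowerSeries ℚ)⁻¹ = 1 :=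
    PowerSeries.mul_inv_cancel _ (by rw [h8c]; norm_num)
  set Q' : PowerSeries ℚ := X * P ^ 3 with hQ'_def
  have hQ'0 : constantCoeff Q' = 0 := by simp [hQ'_def]
  have hPQ' : P ^ 2 - 1 = 8 * Q' := by rw [hQ'_def]; linear_combination hP
  have hfQ' : f = Q' * (1 - Q') ^ 3 := by
    have h1 : (9 - P ^ 2) * (8 : PowerSeries ℚ)⁻¹ = 1 - Q' := by
      have h2 : (9 : PowerSeries ℚ) - P ^ 2 = 8 * (1 - Q') := by linear_combination -hPQ'
      rw [h2, mul_comm (8 : PowerSeries ℚ) (1 - Q'), mul_assoc, h8, mul_one]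
    calc f = (X * P ^ 3) * ((9 - P ^ 2) * (8 : PowerSeries ℚ)⁻¹) ^ 3 := by
            rw [hf_def]; ring
      _ = Q' * (1 - Q') ^ 3 := by rw [h1, hQ'_def]
  -- S Q = Q'
  have hSX : S X = f := substInto_X hf
  have e1 : S Q * (1 - S Q) ^ 3 = Q' * (1 - Q') ^ 3 := by
    have := congrArg S hQ
    rw [map_mul, map_pow, map_sub, map_one, hSX, hfQ'] at this
    exact this
  have hSQ0 : constantCoeff (S Q) = 0 := by
    rw [hS_def]; exact (constantCoeff_substInto hf Q).trans hQ0
  have hSQ : S Q = Q' := by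
    set A := S Q
    have hfac : (A - Q') * (1 - 3 * (A + Q') + 3 * (A ^ 2 + A * Q' + Q' ^ 2)
        - (A ^ 3 + A ^ 2 * Q' + A * Q' ^ 2 + Q' ^ 3)) = 0 := by
      linear_combination e1
    have hE : constantCoeff (1 - 3 * (A + Q') + 3 * (A ^ 2 + A * Q' + Q' ^ 2)
        - (A ^ 3 + A ^ 2 * Q' + A * Q' ^ 2 + Q' ^ 3)) = 1 := by
      simp [hSQ0, hQ'0]
    have hEne : (1 - 3 * (A + Q') + 3 * (A ^ 2 + A * Q' + Q' ^ 2)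
        - (A ^ 3 + A ^ 2 * Q' + A * Q' ^ 2 + Q' ^ 3)) ≠ 0 := by
      intro h; rw [h, map_zero] at hE; norm_num at hE
    have := (mul_eq_zero.mp hfac).resolve_right hEne
    exact sub_eq_zero.mp this
  -- W equation in terms of Q'
  have hW' : Q' * (W + 1) ^ 2 = W := by
    apply mul_left_cancel₀ h8ne
    linear_combination hW - (W + 1) ^ 2 * hPQ'
  -- Z := S Y satisfies the same equation
  have hZeq : Q' * (S Y + 1) ^ 2 = S Y := by
    have := congrArg S hY
    rw [map_mul, map_pow, map_add, map_one, hSQ] at this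
    exact this
  have hZ0 : constantCoeff (S Y) = 0 := by
    rw [hS_def]; exact (constantCoeff_substInto hf Y).trans hY0
  have hfac2 : (S Y - W) * (Q' * (S Y + W + 2) - 1) = 0 := by
    linear_combination hZeq - hW'
  have hFc : constantCoeff (Q' * (S Y + W + 2) - 1) = -1 := by
    simp [hQ'0]
  have hFne : Q' * (S Y + W + 2) - 1 ≠ 0 := by
    intro h; rw [h, map_zero] at hFc; norm_num at hFc
  have := (mul_eq_zero.mp hfac2).resolve_right hFne
  exact sub_eq_zero.mp this
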